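/- Let S be a truncation set, π : A → R a surjective homomorphism of commutative rings with kernel I, and assume A has no S-torsion. Then for all a, b ∈ A^S one has Ψ_S(a) − Ψ_S(b) ∈ X_S(I) if and only if π(a_n) = π(b_n) for all n ∈ S. Consequently Ψ_S induces a well-defined bijection ψ_S : R^S → X_S(A)/X_S(I), r ↦ Ψ_S(ã) mod X_S(I) for any componentwise lift ã of r. -/

import Mathlib

/-- `S/n = {ν : νn ∈ S}`. -/
def truncDiv (S : Set ℕ) (n : ℕ) : Set ℕ := {ν | ν * n ∈ S}

/-- A truncation set: a nonempty set of positive integers closed under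
taking positive divisors. -/
def IsTruncationSet (S : Set ℕ) : Prop :=
  S.Nonempty ∧ (∀ n ∈ S, 0 < n) ∧ ∀ n ∈ S, ∀ d : ℕ, d ∣ n → 0 < d → d ∈ S

/-- Verschiebung `V_n : A^{S/n} → A^S`. -/
def Versch {A : Type*} [CommRing A] (S : Set ℕ) (n : ℕ)
    (a : truncDiv S n → A) : S → A :=
  fun μ =>
    if h : n ∣ μ.1 then
      (n : A) * a ⟨μ.1 / n, show μ.1 / n * n ∈ S by
        rw [Nat.div_mul_cancel h]; exact μ.2⟩
    else 0

/-- `X_S(J)` as an additive subgroup of `A^S`: the topological closure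
(`A` discrete, `A^S` with the product topology) of the subgroup generated by
the elements `V_n⟨a⟩`, `n ∈ S`, `a ∈ J`. -/
def XSgrp (S : Set ℕ) {A : Type*} [CommRing A] (J : Set A) :
    AddSubgroup (S → A) :=
  letI : TopologicalSpace A := ⊥
  haveI : DiscreteTopology A := ⟨rfl⟩
  (AddSubgroup.closure
    {x | ∃ n ∈ S, ∃ a ∈ J, x = Versch S n fun ν => a ^ ν.1}).topologicalClosure

open Classical in
/-- `Ψ_S : A^S → A^S`, `Ψ_S(a)_m = ∑_{n ∈ S, n ∣ m} n·a_n^{m/n}`. -/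
noncomputable def PsiS (S : Set ℕ) {A : Type*} [CommRing A] (a : S → A) :
    S → A :=
  fun m => ∑ n ∈ ((m : ℕ).divisors.filter (· ∈ S)).attach,
    (n.1 : A) * (a ⟨n.1, (Finset.mem_filter.mp n.2).2⟩) ^ ((m : ℕ) / n.1)


open PowerSeries Finset

section Aux
variable {A : Type*} [CommRing A]

/-- The product `∏_{n ∈ T} (1 - a_n X^n)`. -/
noncomputable def PPser (a : ℕ → A) (T : Finset ℕ) : PowerSeries A :=
  ∏ n ∈ T, (1 - PowerSeries.C (a n) * (X : PowerSeries A) ^ n)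

/-- Ghost components. -/
noncomputable def ghc (a : ℕ → A) (m : ℕ) : A :=
  ∑ d ∈ m.divisors, (d : A) * a d ^ (m / d)

lemma PPser_congr {a b : ℕ → A} {T : Finset ℕ} (h : ∀ n ∈ T, a n = b n) :
    PPser a T = PPser b T :=
  Finset.prod_congr rfl fun n hn => by rw [h n hn]

lemma constantCoeff_PPser {a : ℕ → A} {T : Finset ℕ} (hT : 0 ∉ T) :
    constantCoeff (PPser a T) = 1 := by
  rw [PPser, map_prod]
  refine Finset.prod_eq_one fun n hn => ?_
  have hn0 : n ≠ 0 := fun h => hT (h ▸ hn)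
  rw [map_sub, map_one, map_mul, map_pow, constantCoeff_X, zero_pow hn0, mul_zero, sub_zero]

lemma coeff_zero_PPser {a : ℕ → A} {T : Finset ℕ} (hT : 0 ∉ T) :
    (coeff 0) (PPser a T) = 1 := by
  rw [coeff_zero_eq_constantCoeff, constantCoeff_PPser hT]

/-- `f` has the same coefficients as `1` up to degree `N`. -/
def OneTill (N : ℕ) (f : PowerSeries A) : Prop :=
  ∀ k ≤ N, coeff k f = if k = 0 then 1 else 0

lemma OneTill.one (N : ℕ) : OneTill N (1 : PowerSeries A) := fun k _ => coeff_one k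

lemma OneTill.mul {N : ℕ} {f g : PowerSeries A} (hf : OneTill N f) (hg : OneTill N g) :
    OneTill N (f * g) := by
  intro k hk
  rw [coeff_mul]
  rw [Finset.sum_eq_single (k, 0)]
  · have h1 := hf k hk
    have h2 := hg 0 (Nat.zero_le N)
    simp only [h1, h2, if_pos rfl]; simp
  · rintro ⟨i, j⟩ hij hne
    rw [Finset.HasAntidiagonal.mem_antidiagonal] at hij
    have hj : j ≠ 0 := by rintro rfl; exact hne (by simp [← hij])
    rw [hg j (by omega)]
    simp [hj]
  · intro h; exact absurd (Finset.HasAntidiagonal.mem_antidiagonal.mpr (by simp)) h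

lemma OneTill.factor {N n : ℕ} (hn : N < n) (x : A) :
    OneTill N (1 - PowerSeries.C x * (X : PowerSeries A) ^ n) := by
  intro k hk
  rw [map_sub, coeff_one]
  have : (coeff k) (PowerSeries.C x * (X : PowerSeries A) ^ n) = 0 := by
    rw [coeff_C_mul, coeff_X_pow, if_neg (by omega), mul_zero]
  rw [this, sub_zero]

lemma OneTill.PPser {N : ℕ} {a : ℕ → A} {T : Finset ℕ} (h : ∀ n ∈ T, N < n) :
    OneTill N (PPser a T) := by
  classical
  induction T using Finset.induction_on with
  | empty => exact OneTill.one N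
  | insert _ _ hx ih =>
    rw [_root_.PPser, Finset.prod_insert hx]
    exact (OneTill.factor (h _ (Finset.mem_insert_self _ _)) _).mul
      (ih fun n hn => h n (Finset.mem_insert_of_mem hn))

lemma coeff_mul_oneTill {N : ℕ} {f u : PowerSeries A} (hu : OneTill N u) :
    coeff N (f * u) = coeff N f := by
  rw [coeff_mul, Finset.sum_eq_single (N, 0)]
  · rw [hu 0 (Nat.zero_le N)]; simp
  · rintro ⟨i, j⟩ hij hne
    rw [Finset.HasAntidiagonal.mem_antidiagonal] at hij
    have hj : j ≠ 0 := by rintro rfl; exact hne (by simp [← hij])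
    rw [hu j (by omega)]
    simp [hj]
  · intro h; exact absurd (Finset.HasAntidiagonal.mem_antidiagonal.mpr (by simp)) h

lemma coeff_mul_eqTill {N : ℕ} {f f' u : PowerSeries A}
    (h : ∀ k ≤ N, coeff k f = coeff k f') :
    coeff N (u * f) = coeff N (u * f') := by
  rw [coeff_mul, coeff_mul]
  refine Finset.sum_congr rfl fun p hp => ?_
  rw [Finset.HasAntidiagonal.mem_antidiagonal] at hp
  rw [h p.2 (by omega)]

end Aux

section B2
variable {A : Type*} [CommRing A]
noncomputable def Dop (f : PowerSeries A) : PowerSeries A :=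
  PowerSeries.mk fun n => (n : A) * coeff n f
lemma coeff_Dop (f : PowerSeries A) (n : ℕ) : coeff n (Dop f) = (n : A) * coeff n f :=
  coeff_mk n _
noncomputable def VSer (n : ℕ) (x : A) : PowerSeries A :=
  PowerSeries.mk fun m => if n ∣ m ∧ m ≠ 0 then (n : A) * x ^ (m / n) else 0
lemma coeff_VSer (n : ℕ) (x : A) (m : ℕ) :
    coeff m (VSer n x) = if n ∣ m ∧ m ≠ 0 then (n : A) * x ^ (m / n) else 0 :=
  coeff_mk m _

lemma Dop_mul (f g : PowerSeries A) : Dop (f * g) = Dop f * g + f * Dop g := by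
  ext n
  rw [map_add, coeff_Dop, coeff_mul, coeff_mul, coeff_mul, Finset.mul_sum,
    ← Finset.sum_add_distrib]
  refine Finset.sum_congr rfl fun p hp => ?_
  rw [Finset.HasAntidiagonal.mem_antidiagonal] at hp
  rw [coeff_Dop, coeff_Dop, ← hp]
  push_cast
  ring

lemma Dop_factor {n : ℕ} (hn : n ≠ 0) (x : A) :
    Dop (1 - PowerSeries.C x * (X : PowerSeries A) ^ n)
      = -(1 - PowerSeries.C x * (X : PowerSeries A) ^ n) * VSer n x := by
  ext m
  have hne : 0 < n := Nat.pos_of_ne_zero hn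
  have hXn : ∀ k, coeff k (PowerSeries.C x * (X : PowerSeries A) ^ n)
      = if k = n then x else 0 := by
    intro k; rw [coeff_C_mul, coeff_X_pow]; split <;> simp
  have hmul : coeff m (PowerSeries.C x * (X : PowerSeries A) ^ n * VSer n x)
      = if n ≤ m then x * coeff (m - n) (VSer n x) else 0 := by
    have hre : PowerSeries.C x * (X : PowerSeries A) ^ n * VSer n x
        = (VSer n x * PowerSeries.C x) * (X : PowerSeries A) ^ n := by ring
    rw [hre, coeff_mul_X_pow', coeff_mul_C]
    split <;> [ring; rfl]
  have hexp : -(1 - PowerSeries.C x * (X : PowerSeries A) ^ n) * VSer n x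
      = -(VSer n x - PowerSeries.C x * (X : PowerSeries A) ^ n * VSer n x) := by ring
  rw [coeff_Dop, map_sub, coeff_one, hXn, hexp, map_neg, map_sub, coeff_VSer, hmul]
  rcases eq_or_ne m 0 with rfl | hm0
  · have h2 : ¬ n ≤ 0 := by omega
    simp [Ne.symm hn, h2]
  · rw [if_neg hm0]
    by_cases hdvd : n ∣ m
    · have hnm : n ≤ m := Nat.le_of_dvd (Nat.pos_of_ne_zero hm0) hdvd
      rw [if_pos hnm, if_pos (show n ∣ m ∧ m ≠ 0 from ⟨hdvd, hm0⟩), coeff_VSer]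
      rcases eq_or_ne m n with rfl | hmn
      · rw [if_neg (show ¬ (m ∣ m - m ∧ m - m ≠ 0) by simp), Nat.div_self hne]
        simp
      · rcases hdvd with ⟨c, rfl⟩
        have hc1 : 1 ≤ c := by
          rcases Nat.eq_zero_or_pos c with rfl | h
          · simp at hm0
          · exact h
        have h1 : n * c - n = n * (c - 1) := by
          rcases c with _ | c
          · omega
          · simp [Nat.mul_succ]
        rw [if_neg hmn, h1, if_pos (show n ∣ n * (c - 1) ∧ n * (c - 1) ≠ 0 from
            ⟨dvd_mul_right n (c - 1), by
              intro h
              rcases Nat.mul_eq_zero.mp h with h' | h'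
              · exact hn h'
              · exact hmn (by omega)⟩),
          Nat.mul_div_cancel_left _ hne, Nat.mul_div_cancel_left _ hne]
        have hpow : x * x ^ (c - 1) = x ^ c := by
          conv_rhs => rw [← Nat.succ_pred_eq_of_pos hc1]
          rw [pow_succ', Nat.sub_one]
        rw [show x * ((n : A) * x ^ (c - 1)) = (n : A) * (x * x ^ (c - 1)) by ring, hpow]
        ring
    · have hmn : m ≠ n := by rintro rfl; exact hdvd dvd_rfl
      have hV : coeff (m - n) (VSer n x) = 0 := by
        rw [coeff_VSer, if_neg]
        rintro ⟨h1, h2⟩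
        rcases le_or_gt n m with h | h
        · exact hdvd (by rw [show m = (m - n) + n by omega]; exact dvd_add h1 dvd_rfl)
        · exact h2 (by omega)
      rw [if_neg hmn, if_neg (fun h => hdvd h.1)]
      split
      · rw [hV]; ring
      · ring


lemma Dop_one : Dop (1 : PowerSeries A) = 0 := by
  ext n; rw [coeff_Dop, coeff_one, map_zero]
  split <;> simp_all

lemma Dop_PPser {a : ℕ → A} {T : Finset ℕ} (hT : 0 ∉ T) :
    Dop (PPser a T) = -(PPser a T) * ∑ n ∈ T, VSer n (a n) := by
  classical
  induction T using Finset.induction_on with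
  | empty =>
    simp only [PPser, Finset.prod_empty, Finset.sum_empty, mul_zero, Dop_one]
  | insert n T hn ih =>
    have hn0 : n ≠ 0 := fun h => hT (h ▸ Finset.mem_insert_self _ _)
    have hT0 : 0 ∉ T := fun h => hT (Finset.mem_insert_of_mem h)
    rw [PPser, Finset.prod_insert hn, Finset.sum_insert hn, ← PPser, Dop_mul, ih hT0,
      Dop_factor hn0]
    ring

end B2

section B3
variable {A : Type*} [CommRing A]

lemma coeff_G_formula {P G : PowerSeries A} (hP : coeff 0 P = 1)
    (hD : Dop P = -(P * G)) (k : ℕ) :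
    coeff k G = -((k : A) * coeff k P) -
      ∑ p ∈ (Finset.HasAntidiagonal.antidiagonal k).erase (0, k), coeff p.1 P * coeff p.2 G := by
  have h := congrArg (coeff k) hD
  have hmem0 : ((0, k) : ℕ × ℕ) ∈ Finset.HasAntidiagonal.antidiagonal k := by simp
  rw [coeff_Dop, map_neg, coeff_mul, ← Finset.add_sum_erase _ _ hmem0] at h
  dsimp only at h
  rw [hP, one_mul] at h
  linear_combination h

lemma ghost_det {P P' G G' : PowerSeries A} (hP : coeff 0 P = 1) (hP' : coeff 0 P' = 1)
    (hD : Dop P = -(P * G)) (hD' : Dop P' = -(P' * G')) {m : ℕ}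
    (hc : ∀ k ≤ m, coeff k P = coeff k P') : ∀ k ≤ m, coeff k G = coeff k G' := by
  intro k
  induction k using Nat.strong_induction_on with
  | _ k ih =>
    intro hk
    rw [coeff_G_formula hP hD, coeff_G_formula hP' hD', hc k hk]
    congr 1
    refine Finset.sum_congr rfl fun p hp => ?_
    have hmem := Finset.mem_of_mem_erase hp
    rw [Finset.HasAntidiagonal.mem_antidiagonal] at hmem
    have hne := Finset.ne_of_mem_erase hp
    have h1 : p.1 ≠ 0 := by
      rintro h
      exact hne (Prod.ext h (by omega))
    rw [hc p.1 (by omega), ih p.2 (by omega) (by omega)]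

lemma divisors_subset_Icc {m : ℕ} : m.divisors ⊆ Finset.Icc 1 m := by
  intro d hd
  have h1 := Nat.pos_of_mem_divisors hd
  have h2 := Nat.divisor_le hd
  rw [Finset.mem_Icc]
  omega

lemma coeff_sum_VSer {a : ℕ → A} {T : Finset ℕ} {m : ℕ} (hm : m ≠ 0)
    (hdiv : m.divisors ⊆ T) :
    coeff m (∑ n ∈ T, VSer n (a n)) = ghc a m := by
  classical
  rw [map_sum, Finset.sum_congr rfl fun n _ => coeff_VSer n (a n) m, ghc,
    ← Finset.sum_filter]
  refine Finset.sum_congr ?_ fun d hd => rfl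
  ext d
  rw [Finset.mem_filter, Nat.mem_divisors]
  constructor
  · rintro ⟨-, h1, h2⟩; exact ⟨h1, h2⟩
  · rintro ⟨h1, h2⟩; exact ⟨hdiv (Nat.mem_divisors.mpr ⟨h1, h2⟩), h1, h2⟩

/-- Triangular reconstruction of the coordinates from the coefficient sequence. -/
noncomputable def scA (g : ℕ → A) : ℕ → ℕ → A
  | 0 => fun _ => 0
  | n + 1 => Function.update (scA g n) (n + 1)
      (coeff (n + 1) (PPser (scA g n) (Finset.Icc 1 n)) - g (n + 1))

noncomputable def sc (g : ℕ → A) (n : ℕ) : A := scA g n n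

lemma sc_zero (g : ℕ → A) : sc g 0 = 0 := rfl

lemma scA_agree (g : ℕ → A) : ∀ {n m : ℕ}, m ≤ n → scA g n m = sc g m := by
  intro n
  induction n with
  | zero => intro m hm; interval_cases m; rfl
  | succ n ih =>
    intro m hm
    rcases eq_or_ne m (n + 1) with rfl | hne
    · rfl
    · have : m ≤ n := by omega
      rw [show scA g (n+1) m = scA g n m from by rw [scA, Function.update_of_ne hne], ih this]

lemma PP_scA (g : ℕ → A) (n : ℕ) :
    PPser (scA g n) (Finset.Icc 1 n) = PPser (sc g) (Finset.Icc 1 n) :=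
  PPser_congr fun d hd => scA_agree g (Finset.mem_Icc.mp hd).2

lemma sc_succ (g : ℕ → A) (n : ℕ) :
    sc g (n + 1) = coeff (n + 1) (PPser (sc g) (Finset.Icc 1 n)) - g (n + 1) := by
  show scA g (n+1) (n+1) = _
  rw [scA, Function.update_self, PP_scA]

lemma zero_not_mem_Icc (n : ℕ) : 0 ∉ Finset.Icc 1 n := by simp

lemma coeff_PP_Icc_succ (c : ℕ → A) (n : ℕ) :
    coeff (n + 1) (PPser c (Finset.Icc 1 (n + 1)))
      = coeff (n + 1) (PPser c (Finset.Icc 1 n)) - c (n + 1) := by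
  rw [PPser, Finset.prod_Icc_succ_top (by omega), ← PPser, mul_sub, mul_one, map_sub]
  congr 1
  have hre : PPser c (Finset.Icc 1 n) * (PowerSeries.C (c (n+1)) * (X : PowerSeries A) ^ (n+1))
      = (PPser c (Finset.Icc 1 n) * PowerSeries.C (c (n+1))) * (X : PowerSeries A) ^ (n+1) := by
    ring
  rw [hre, coeff_mul_X_pow', if_pos le_rfl, Nat.sub_self, coeff_mul_C,
    coeff_zero_PPser (zero_not_mem_Icc n), one_mul]

lemma sc_spec (g : ℕ → A) (n : ℕ) :
    coeff (n + 1) (PPser (sc g) (Finset.Icc 1 (n + 1))) = g (n + 1) := by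
  rw [coeff_PP_Icc_succ, sc_succ]
  ring

lemma sc_unique {g : ℕ → A} {c : ℕ → A} {n : ℕ}
    (hc : ∀ k, 1 ≤ k → k ≤ n → coeff k (PPser c (Finset.Icc 1 k)) = g k) :
    ∀ k ≤ n, 1 ≤ k → c k = sc g k := by
  intro k
  induction k using Nat.strong_induction_on with
  | _ k ih =>
    intro hkn hk1
    obtain ⟨j, rfl⟩ : ∃ j, k = j + 1 := ⟨k - 1, by omega⟩
    have h1 := hc (j+1) (by omega) hkn
    rw [coeff_PP_Icc_succ] at h1
    have h2 : PPser c (Finset.Icc 1 j) = PPser (sc g) (Finset.Icc 1 j) :=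
      PPser_congr fun d hd => by
        have hd' := Finset.mem_Icc.mp hd
        exact ih d (by omega) (by omega) (by omega)
    rw [h2] at h1
    rw [sc_succ]
    linear_combination -h1

lemma sc_roundtrip (a : ℕ → A) {k : ℕ} (hk : 1 ≤ k) :
    sc (fun N => coeff N (PPser a (Finset.Icc 1 N))) k = a k :=
  (sc_unique (fun k _ _ => rfl) k le_rfl hk).symm

lemma coeff_mul_sub_mem (J : Ideal A) {f f' u u' : PowerSeries A}
    (hf : ∀ k, coeff k f - coeff k f' ∈ J) (hu : ∀ k, coeff k u - coeff k u' ∈ J) :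
    ∀ k, coeff k (f * u) - coeff k (f' * u') ∈ J := by
  intro k
  rw [coeff_mul, coeff_mul, ← Finset.sum_sub_distrib]
  refine Submodule.sum_mem _ fun p _ => ?_
  have h : ∀ x y x' y' : A, x * y - x' * y' = x * (y - y') + (x - x') * y' := by
    intros; ring
  rw [h]
  exact J.add_mem (J.mul_mem_left _ (hu p.2)) (J.mul_mem_right _ (hf p.1))

lemma PPser_zero_fun (T : Finset ℕ) : PPser (fun _ => (0 : A)) T = 1 := by
  rw [PPser]
  refine Finset.prod_eq_one fun n _ => by rw [map_zero, zero_mul, sub_zero]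

lemma coeff_PPser_sub_mem (J : Ideal A) {a b : ℕ → A} {T : Finset ℕ}
    (h : ∀ n ∈ T, a n - b n ∈ J) :
    ∀ k, coeff k (PPser a T) - coeff k (PPser b T) ∈ J := by
  classical
  induction T using Finset.induction_on with
  | empty =>
    intro k
    simp only [PPser, Finset.prod_empty, sub_self]
    exact J.zero_mem
  | insert n T hn ih =>
    intro k
    rw [PPser, PPser, Finset.prod_insert hn, Finset.prod_insert hn, ← PPser, ← PPser]
    refine coeff_mul_sub_mem J (fun k => ?_) (ih fun n hn' => h n (Finset.mem_insert_of_mem hn')) k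
    rw [map_sub, map_sub, coeff_one]
    have hx : ∀ x : A, coeff k (PowerSeries.C x * (X : PowerSeries A) ^ n)
        = if k = n then x else 0 := by
      intro x; rw [coeff_C_mul, coeff_X_pow]; split <;> simp
    rw [hx, hx]
    have h2 : ∀ u v w : A, (u - v) - (u - w) = w - v := by intros; ring
    rw [h2]
    split
    · have := h n (Finset.mem_insert_self n T)
      rw [← neg_sub]
      exact J.neg_mem this
    · simpa using J.zero_mem

lemma coeff_PPser_mem (J : Ideal A) {a : ℕ → A} {T : Finset ℕ}
    (h : ∀ n ∈ T, a n ∈ J) {k : ℕ} (hk : 1 ≤ k) : coeff k (PPser a T) ∈ J := by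
  have h1 := coeff_PPser_sub_mem J (b := fun _ => 0) (fun n hn => by
    rw [sub_zero]; exact h n hn) k
  rw [PPser_zero_fun, coeff_one, if_neg (by omega)] at h1
  rwa [sub_zero] at h1

lemma coeff_mul_left_mem (J : Ideal A) {f g : PowerSeries A}
    (hf : ∀ k, coeff k f ∈ J) (k : ℕ) : coeff k (f * g) ∈ J := by
  rw [coeff_mul]
  exact Submodule.sum_mem _ fun p _ => J.mul_mem_right _ (hf p.1)

lemma coeff_mul_mem_of_ge_one (J : Ideal A) {f g : PowerSeries A}
    (hf : ∀ k, 1 ≤ k → coeff k f ∈ J) (hg : ∀ k, 1 ≤ k → coeff k g ∈ J)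
    {N : ℕ} (hN : 1 ≤ N) : coeff N (f * g) ∈ J := by
  rw [coeff_mul]
  refine Submodule.sum_mem _ fun p hp => ?_
  rw [Finset.HasAntidiagonal.mem_antidiagonal] at hp
  rcases Nat.eq_zero_or_pos p.1 with h1 | h1
  · exact J.mul_mem_left _ (hg p.2 (by omega))
  · exact J.mul_mem_right _ (hf p.1 (by omega))

lemma sc_mem (J : Ideal A) {g : ℕ → A} (hg : ∀ N, 1 ≤ N → g N ∈ J) :
    ∀ n, sc g n ∈ J := by
  intro n
  induction n using Nat.strong_induction_on with
  | _ n ih =>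
    rcases n with _ | n
    · rw [sc_zero]; exact J.zero_mem
    · rw [sc_succ]
      refine J.sub_mem (coeff_PPser_mem J (fun d hd => ?_) (by omega)) (hg _ (by omega))
      exact ih d (by have := (Finset.mem_Icc.mp hd).2; omega)

lemma sc_congr_mem (J : Ideal A) {g g' : ℕ → A} (hgg' : ∀ N, 1 ≤ N → g N - g' N ∈ J) :
    ∀ n, sc g n - sc g' n ∈ J := by
  intro n
  induction n using Nat.strong_induction_on with
  | _ n ih =>
    rcases n with _ | n
    · rw [sc_zero, sc_zero, sub_self]; exact J.zero_mem
    · have h3 : sc g (n+1) - sc g' (n+1)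
          = (coeff (n+1) (PPser (sc g) (Finset.Icc 1 n))
              - coeff (n+1) (PPser (sc g') (Finset.Icc 1 n)))
            - (g (n+1) - g' (n+1)) := by
        rw [sc_succ, sc_succ]; ring
      rw [h3]
      refine J.sub_mem (coeff_PPser_sub_mem J (fun d hd => ?_) _) (hgg' _ (by omega))
      exact ih d (by have := (Finset.mem_Icc.mp hd).2; omega)

end B3

section B4
variable {A : Type*} [CommRing A]

lemma PPser_Icc_split (a : ℕ → A) {k m : ℕ} (h1 : 1 ≤ k) (h : k ≤ m) :
    PPser a (Finset.Icc 1 m) = PPser a (Finset.Icc 1 k) * PPser a (Finset.Ioc k m) := by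
  rw [PPser, PPser, PPser, ← Finset.prod_union (by
    rw [Finset.disjoint_left]
    intro x hx hx'
    rw [Finset.mem_Icc] at hx
    rw [Finset.mem_Ioc] at hx'
    omega), show Finset.Icc 1 k ∪ Finset.Ioc k m = Finset.Icc 1 m from by
    ext x
    simp only [Finset.mem_union, Finset.mem_Icc, Finset.mem_Ioc]
    omega]

lemma oneTill_PPser_Ioc (a : ℕ → A) (k m : ℕ) : OneTill k (PPser a (Finset.Ioc k m)) :=
  OneTill.PPser fun n hn => (Finset.mem_Ioc.mp hn).1

/-- The coefficient sequence of the product (Witt sum). -/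
noncomputable def gsum (a b : ℕ → A) (N : ℕ) : A :=
  coeff N (PPser a (Finset.Icc 1 N) * PPser b (Finset.Icc 1 N))

/-- The coefficient sequence of the quotient (Witt difference). -/
noncomputable def gdiff (a b : ℕ → A) (N : ℕ) : A :=
  coeff N (PPser a (Finset.Icc 1 N) * PowerSeries.invOfUnit (PPser b (Finset.Icc 1 N)) 1)

lemma gsum_stab (a b : ℕ → A) {k m : ℕ} (h1 : 1 ≤ k) (h : k ≤ m) :
    gsum a b k = coeff k (PPser a (Finset.Icc 1 m) * PPser b (Finset.Icc 1 m)) := by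
  rw [gsum, PPser_Icc_split a h1 h, PPser_Icc_split b h1 h]
  have hre : PPser a (Finset.Icc 1 k) * PPser a (Finset.Ioc k m)
        * (PPser b (Finset.Icc 1 k) * PPser b (Finset.Ioc k m))
      = PPser a (Finset.Icc 1 k) * PPser b (Finset.Icc 1 k)
        * (PPser a (Finset.Ioc k m) * PPser b (Finset.Ioc k m)) := by ring
  rw [hre, coeff_mul_oneTill ((oneTill_PPser_Ioc a k m).mul (oneTill_PPser_Ioc b k m))]

lemma constCoeff_PPser_unit (b : ℕ → A) (T : Finset ℕ) (hT : 0 ∉ T) :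
    constantCoeff (PPser b T) = ((1 : Aˣ) : A) := by
  rw [constantCoeff_PPser hT, Units.val_one]

lemma PPser_mul_inv (b : ℕ → A) (T : Finset ℕ) (hT : 0 ∉ T) :
    PPser b T * PowerSeries.invOfUnit (PPser b T) 1 = 1 :=
  PowerSeries.mul_invOfUnit _ _ (constCoeff_PPser_unit b T hT)

lemma gdiff_stab (a b : ℕ → A) {k m : ℕ} (h1 : 1 ≤ k) (h : k ≤ m) :
    gdiff a b k = coeff k (PPser a (Finset.Icc 1 m)
      * PowerSeries.invOfUnit (PPser b (Finset.Icc 1 m)) 1) := by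
  set W := PowerSeries.invOfUnit (PPser b (Finset.Icc 1 m)) 1 with hW
  set W' := PowerSeries.invOfUnit (PPser b (Finset.Icc 1 k)) 1 with hW'
  have hbm : PPser b (Finset.Icc 1 m) * W = 1 := PPser_mul_inv b _ (zero_not_mem_Icc m)
  have hbk : PPser b (Finset.Icc 1 k) * W' = 1 := PPser_mul_inv b _ (zero_not_mem_Icc k)
  have hsplit := PPser_Icc_split b h1 h
  have hWW : W' = PPser b (Finset.Ioc k m) * W := by
    calc W' = W' * (PPser b (Finset.Icc 1 m) * W) := by rw [hbm, mul_one]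
    _ = (PPser b (Finset.Icc 1 k) * W') * (PPser b (Finset.Ioc k m) * W) := by
        rw [hsplit]; ring
    _ = PPser b (Finset.Ioc k m) * W := by rw [hbk, one_mul]
  rw [gdiff, ← hW', hWW, PPser_Icc_split a h1 h]
  have hre1 : PPser a (Finset.Icc 1 k) * (PPser b (Finset.Ioc k m) * W)
      = (PPser a (Finset.Icc 1 k) * W) * PPser b (Finset.Ioc k m) := by ring
  have hre2 : PPser a (Finset.Icc 1 k) * PPser a (Finset.Ioc k m) * W
      = (PPser a (Finset.Icc 1 k) * W) * PPser a (Finset.Ioc k m) := by ring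
  rw [hre1, hre2, coeff_mul_oneTill (oneTill_PPser_Ioc b k m),
    coeff_mul_oneTill (oneTill_PPser_Ioc a k m)]

theorem ghc_gsum (a b : ℕ → A) {m : ℕ} (hm : 1 ≤ m) :
    ghc (sc (gsum a b)) m = ghc a m + ghc b m := by
  set T := Finset.Icc 1 m with hT
  have h0 : 0 ∉ T := zero_not_mem_Icc m
  set c := sc (gsum a b) with hc
  have hdiv : m.divisors ⊆ T := divisors_subset_Icc
  have hP : coeff 0 (PPser c T) = 1 := coeff_zero_PPser h0
  have hP' : coeff 0 (PPser a T * PPser b T) = 1 := by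
    rw [coeff_zero_eq_constantCoeff, map_mul, constantCoeff_PPser h0, constantCoeff_PPser h0,
      one_mul]
  have hD : Dop (PPser c T) = -(PPser c T * ∑ n ∈ T, VSer n (c n)) := by
    rw [Dop_PPser h0]; ring
  have hD' : Dop (PPser a T * PPser b T)
      = -((PPser a T * PPser b T) * ((∑ n ∈ T, VSer n (a n)) + ∑ n ∈ T, VSer n (b n))) := by
    rw [Dop_mul, Dop_PPser h0, Dop_PPser h0]; ring
  have hcoeff : ∀ k ≤ m, coeff k (PPser c T) = coeff k (PPser a T * PPser b T) := by
    intro k hk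
    rcases Nat.eq_zero_or_pos k with rfl | hk1
    · rw [hP, hP']
    · obtain ⟨j, rfl⟩ : ∃ j, k = j + 1 := ⟨k - 1, by omega⟩
      have hstab : coeff (j+1) (PPser c T)
          = coeff (j+1) (PPser c (Finset.Icc 1 (j+1))) := by
        rw [hT, PPser_Icc_split c hk1 hk]
        rw [coeff_mul_oneTill (oneTill_PPser_Ioc c (j+1) m)]
      rw [hstab, hc, sc_spec, ← gsum_stab a b hk1 hk]
  have hG := ghost_det hP hP' hD hD' hcoeff m le_rfl
  rw [coeff_sum_VSer (by omega) hdiv] at hG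
  rw [map_add, coeff_sum_VSer (by omega) hdiv, coeff_sum_VSer (by omega) hdiv] at hG
  exact hG

theorem ghc_gdiff (a b : ℕ → A) {m : ℕ} (hm : 1 ≤ m) :
    ghc (sc (gdiff a b)) m = ghc a m - ghc b m := by
  set T := Finset.Icc 1 m with hT
  have h0 : 0 ∉ T := zero_not_mem_Icc m
  set c := sc (gdiff a b) with hc
  have hdiv : m.divisors ⊆ T := divisors_subset_Icc
  set W := PowerSeries.invOfUnit (PPser b T) 1 with hW
  have hbW : PPser b T * W = 1 := PPser_mul_inv b T h0
  have hWb : W * PPser b T = 1 := by rw [mul_comm]; exact hbW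
  have hP : coeff 0 (PPser c T) = 1 := coeff_zero_PPser h0
  have hP' : coeff 0 (PPser a T * W) = 1 := by
    rw [coeff_zero_eq_constantCoeff, map_mul, constantCoeff_PPser h0, one_mul, hW,
      PowerSeries.constantCoeff_invOfUnit, inv_one, Units.val_one]
  have hD : Dop (PPser c T) = -(PPser c T * ∑ n ∈ T, VSer n (c n)) := by
    rw [Dop_PPser h0]; ring
  have hDW : Dop W = (∑ n ∈ T, VSer n (b n)) * W := by
    have h1 : Dop (PPser b T * W) = 0 := by rw [hbW, Dop_one]
    rw [Dop_mul, Dop_PPser h0] at h1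
    have h3 : PPser b T * Dop W = PPser b T * ((∑ n ∈ T, VSer n (b n)) * W) := by
      linear_combination h1
    calc Dop W = (W * PPser b T) * Dop W := by rw [hWb, one_mul]
    _ = W * (PPser b T * ((∑ n ∈ T, VSer n (b n)) * W)) := by rw [mul_assoc, h3]
    _ = ((∑ n ∈ T, VSer n (b n)) * W) * (PPser b T * W) := by ring
    _ = (∑ n ∈ T, VSer n (b n)) * W := by rw [hbW, mul_one]
  have hD' : Dop (PPser a T * W)
      = -((PPser a T * W) * ((∑ n ∈ T, VSer n (a n)) - ∑ n ∈ T, VSer n (b n))) := by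
    rw [Dop_mul, Dop_PPser h0, hDW]; ring
  have hcoeff : ∀ k ≤ m, coeff k (PPser c T) = coeff k (PPser a T * W) := by
    intro k hk
    rcases Nat.eq_zero_or_pos k with rfl | hk1
    · rw [hP, hP']
    · obtain ⟨j, rfl⟩ : ∃ j, k = j + 1 := ⟨k - 1, by omega⟩
      have hstab : coeff (j+1) (PPser c T)
          = coeff (j+1) (PPser c (Finset.Icc 1 (j+1))) := by
        rw [hT, PPser_Icc_split c hk1 hk]
        rw [coeff_mul_oneTill (oneTill_PPser_Ioc c (j+1) m)]
      rw [hstab, hc, sc_spec, gdiff_stab a b hk1 hk, ← hT, ← hW]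
  have hG := ghost_det hP hP' hD hD' hcoeff m le_rfl
  rw [coeff_sum_VSer (by omega) hdiv] at hG
  rw [map_sub, coeff_sum_VSer (by omega) hdiv, coeff_sum_VSer (by omega) hdiv] at hG
  exact hG

end B4

section B5
variable {A : Type*} [CommRing A]

open Classical in
/-- Extension by zero of a function on `S`. -/
noncomputable def extS (S : Set ℕ) (a : ↥S → A) : ℕ → A :=
  fun n => if h : n ∈ S then a ⟨n, h⟩ else 0

lemma extS_apply {S : Set ℕ} (a : ↥S → A) (n : ↥S) : extS S a n.1 = a n := by
  rw [extS, dif_pos n.2]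

lemma PsiS_eq_ghc {S : Set ℕ} (hS : IsTruncationSet S) (c : ℕ → A) (m : ↥S) :
    PsiS S (fun n => c n.1) m = ghc c m.1 := by
  classical
  have hfil : ((m : ℕ).divisors.filter (· ∈ S)) = (m : ℕ).divisors :=
    Finset.filter_true_of_mem fun d hd =>
      hS.2.2 m.1 m.2 d (Nat.dvd_of_mem_divisors hd) (Nat.pos_of_mem_divisors hd)
  have h1 : PsiS S (fun n : ↥S => c n.1) m
      = ∑ n ∈ ((m : ℕ).divisors.filter (· ∈ S)).attach,
          (fun d : ℕ => (d : A) * c d ^ ((m : ℕ) / d)) n.1 := rfl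
  rw [h1, Finset.sum_attach ((m : ℕ).divisors.filter (· ∈ S))
    (fun d : ℕ => (d : A) * c d ^ ((m : ℕ) / d)), hfil, ghc]

lemma PsiS_eq_ghc_ext {S : Set ℕ} (hS : IsTruncationSet S) (a : ↥S → A) (m : ↥S) :
    PsiS S a m = ghc (extS S a) m.1 := by
  have h : a = fun n : ↥S => extS S a n.1 := funext fun n => (extS_apply a n).symm
  conv_lhs => rw [h]
  exact PsiS_eq_ghc hS _ m

lemma ghc_congr {z z' : ℕ → A} {m : ℕ} (h : ∀ d ∈ m.divisors, z d = z' d) :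
    ghc z m = ghc z' m :=
  Finset.sum_congr rfl fun d hd => by rw [h d hd]

lemma ghc_unique {S : Set ℕ} (hS : IsTruncationSet S)
    (htf : ∀ n ∈ S, Function.Injective fun x : A => (n : A) * x)
    {n : ℕ} (hn : n ∈ S) {z z' : ℕ → A}
    (h : ∀ d, d ∣ n → ghc z d = ghc z' d) : ∀ d, d ∣ n → z d = z' d := by
  intro d
  induction d using Nat.strong_induction_on with
  | _ d ih =>
    intro hd
    have hn0 : 0 < n := hS.2.1 n hn
    have hd0 : 0 < d := Nat.pos_of_dvd_of_pos hd hn0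
    have hdS : d ∈ S := hS.2.2 n hn d hd hd0
    have hgh := h d hd
    rw [ghc, ghc] at hgh
    have hdd : d ∈ d.divisors := Nat.mem_divisors_self d (by omega)
    rw [← Finset.add_sum_erase _ _ hdd, ← Finset.add_sum_erase _ _ hdd] at hgh
    have hrest : ∑ e ∈ d.divisors.erase d, (e : A) * z e ^ (d / e)
        = ∑ e ∈ d.divisors.erase d, (e : A) * z' e ^ (d / e) := by
      refine Finset.sum_congr rfl fun e he => ?_
      have he1 := Finset.mem_of_mem_erase he
      have hed : e ∣ d := Nat.dvd_of_mem_divisors he1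
      have hene : e ≠ d := Finset.ne_of_mem_erase he
      have helt : e < d := lt_of_le_of_ne (Nat.le_of_dvd hd0 hed) hene
      rw [ih e helt (hed.trans hd)]
    rw [hrest] at hgh
    have h2 : (d : A) * z d ^ (d / d) = (d : A) * z' d ^ (d / d) := by
      exact add_right_cancel hgh
    rw [Nat.div_self hd0, pow_one, pow_one] at h2
    exact htf d hdS h2

lemma mem_XSgrp_iff {S : Set ℕ} (J : Set A) (x : ↥S → A) :
    x ∈ XSgrp S J ↔ ∀ F : Finset ↥S,
      ∃ g ∈ AddSubgroup.closure
        {y : ↥S → A | ∃ n ∈ S, ∃ a ∈ J, y = Versch S n fun ν => a ^ ν.1},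
      ∀ i ∈ F, g i = x i := by
  letI : TopologicalSpace A := ⊥
  haveI : DiscreteTopology A := ⟨rfl⟩
  have hmem : x ∈ XSgrp S J ↔ x ∈ _root_.closure
      ((AddSubgroup.closure
        {y : ↥S → A | ∃ n ∈ S, ∃ a ∈ J, y = Versch S n fun ν => a ^ ν.1} : AddSubgroup (↥S → A))
        : Set (↥S → A)) := Iff.rfl
  rw [hmem, mem_closure_iff]
  constructor
  · intro h F
    have hO : IsOpen {y : ↥S → A | ∀ i ∈ F, y i = x i} := by
      have : {y : ↥S → A | ∀ i ∈ F, y i = x i} = Set.pi ↑F (fun i => {x i}) := by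
        ext y
        simp [Set.mem_pi]
      rw [this]
      exact isOpen_set_pi F.finite_toSet fun a _ => isOpen_discrete _
    obtain ⟨g, hg1, hg2⟩ := h _ hO (fun i _ => rfl)
    exact ⟨g, hg2, hg1⟩
  · intro h o ho hxo
    obtain ⟨I, u, h1, h2⟩ := isOpen_pi_iff.mp ho x hxo
    obtain ⟨g, hg, hgI⟩ := h I
    refine ⟨g, h2 fun i hi => ?_, hg⟩
    rw [hgI i hi]
    exact (h1 i hi).2

lemma coeff_invOfUnit_mem (J : Ideal A) {b : ℕ → A} {T : Finset ℕ} (hT : 0 ∉ T)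
    (hb : ∀ n ∈ T, b n ∈ J) {N : ℕ} (hN : 1 ≤ N) :
    coeff N (PowerSeries.invOfUnit (PPser b T) 1) ∈ J := by
  set W := PowerSeries.invOfUnit (PPser b T) 1 with hW
  have hbW : PPser b T * W = 1 := PPser_mul_inv b T hT
  have hfact : W - 1 = (1 - PPser b T) * W := by
    rw [sub_mul, one_mul, hbW]
  have h1 : coeff N W - coeff N (1 : PowerSeries A) ∈ J := by
    rw [← map_sub, hfact]
    refine coeff_mul_left_mem J (fun k => ?_) N
    rw [map_sub, coeff_one]
    rcases Nat.eq_zero_or_pos k with rfl | hk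
    · rw [coeff_zero_PPser hT]
      simpa using J.zero_mem
    · rw [if_neg (by omega)]
      rw [zero_sub]
      exact J.neg_mem (coeff_PPser_mem J hb hk)
  rwa [coeff_one, if_neg (by omega), sub_zero] at h1

lemma sc_gdiff_self (z : ℕ → A) (n : ℕ) : sc (gdiff z z) n = 0 := by
  rcases n with _ | n
  · rfl
  · have h := sc_unique (g := gdiff z z) (c := fun _ => (0 : A)) (n := n + 1)
      (fun k hk1 _ => by
        rw [PPser_zero_fun, gdiff, PPser_mul_inv z _ (zero_not_mem_Icc k)])
      (n + 1) le_rfl (by omega)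
    exact h.symm

lemma ghc_zero_fun {m : ℕ} (hm : m ≠ 0) : ghc (fun _ => (0 : A)) m = 0 := by
  rw [ghc]
  refine Finset.sum_eq_zero fun d hd => ?_
  have h1 : 0 < m / d :=
    Nat.div_pos (Nat.le_of_dvd (by omega) (Nat.dvd_of_mem_divisors hd))
      (Nat.pos_of_mem_divisors hd)
  rw [zero_pow (by omega), mul_zero]

lemma engine_grp {S : Set ℕ} (hS : IsTruncationSet S) (J : Ideal A) :
    ∀ g ∈ AddSubgroup.closure
      {y : ↥S → A | ∃ n ∈ S, ∃ a ∈ (J : Set A), y = Versch S n fun ν => a ^ ν.1},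
      ∃ z : ℕ → A, (∀ k, z k ∈ J) ∧ ∀ m : ↥S, ghc z m.1 = g m := by
  intro g hg
  induction hg using AddSubgroup.closure_induction with
  | mem y hy =>
    obtain ⟨n, hn, e, he, rfl⟩ := hy
    refine ⟨fun k => if k = n then e else 0, fun k => ?_, fun m => ?_⟩
    · show (if k = n then e else 0) ∈ J
      split
      · exact he
      · exact J.zero_mem
    have hm0 : 0 < m.1 := hS.2.1 m.1 m.2
    rw [Versch]
    split
    · next hdvd =>
      rw [ghc, Finset.sum_eq_single n]
      · rw [if_pos rfl]
      · intro d hd hne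
        have h1 : 0 < m.1 / d :=
          Nat.div_pos (Nat.le_of_dvd hm0 (Nat.dvd_of_mem_divisors hd))
            (Nat.pos_of_mem_divisors hd)
        rw [if_neg hne, zero_pow (by omega), mul_zero]
      · intro hnot
        exact absurd (Nat.mem_divisors.mpr ⟨hdvd, by omega⟩) hnot
    · next hdvd =>
      rw [ghc]
      refine Finset.sum_eq_zero fun d hd => ?_
      have hne : d ≠ n := by
        rintro rfl
        exact hdvd (Nat.dvd_of_mem_divisors hd)
      have h1 : 0 < m.1 / d :=
        Nat.div_pos (Nat.le_of_dvd hm0 (Nat.dvd_of_mem_divisors hd))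
          (Nat.pos_of_mem_divisors hd)
      rw [if_neg hne, zero_pow (by omega), mul_zero]
  | zero =>
    exact ⟨fun _ => 0, fun _ => J.zero_mem, fun m => by
      rw [ghc_zero_fun (by have := hS.2.1 m.1 m.2; omega)]
      rfl⟩
  | add y y' hy hy' py py' =>
    obtain ⟨z1, hz1J, hz1⟩ := py
    obtain ⟨z2, hz2J, hz2⟩ := py'
    refine ⟨sc (gsum z1 z2), sc_mem J (fun N hN => ?_), fun m => ?_⟩
    · exact coeff_mul_mem_of_ge_one J
        (fun k hk => coeff_PPser_mem J (fun n _ => hz1J n) hk)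
        (fun k hk => coeff_PPser_mem J (fun n _ => hz2J n) hk) hN
    · have hm1 : 1 ≤ m.1 := hS.2.1 m.1 m.2
      rw [ghc_gsum z1 z2 hm1, hz1 m, hz2 m]
      rfl
  | neg y hy py =>
    obtain ⟨z1, hz1J, hz1⟩ := py
    refine ⟨sc (gdiff (fun _ => 0) z1), sc_mem J (fun N hN => ?_), fun m => ?_⟩
    · rw [gdiff, PPser_zero_fun, one_mul]
      exact coeff_invOfUnit_mem J (zero_not_mem_Icc N) (fun n _ => hz1J n) hN
    · have hm1 : 1 ≤ m.1 := hS.2.1 m.1 m.2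
      rw [ghc_gdiff (fun _ => 0) z1 hm1, ghc_zero_fun (by omega), hz1 m, zero_sub]
      rfl

lemma engine {S : Set ℕ} (hS : IsTruncationSet S)
    (htf : ∀ n ∈ S, Function.Injective fun x : A => (n : A) * x)
    (J : Ideal A) (x : ↥S → A) (hx : x ∈ XSgrp S (J : Set A)) :
    ∃ c : ↥S → A, (∀ n, c n ∈ J) ∧ PsiS S c = x := by
  classical
  rw [mem_XSgrp_iff] at hx
  have key : ∀ n : ↥S, ∃ z : ℕ → A, (∀ k, z k ∈ J) ∧
      ∀ d : ℕ, d ∣ n.1 → ∀ hd : d ∈ S, ghc z d = x ⟨d, hd⟩ := by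
    intro n
    obtain ⟨g, hg, hagree⟩ := hx (Finset.subtype (· ∈ S) n.1.divisors)
    obtain ⟨z, hzJ, hz⟩ := engine_grp hS J g hg
    refine ⟨z, hzJ, fun d hd hdS => ?_⟩
    rw [hz ⟨d, hdS⟩]
    refine hagree ⟨d, hdS⟩ ?_
    rw [Finset.mem_subtype]
    exact Nat.mem_divisors.mpr ⟨hd, by have := hS.2.1 n.1 n.2; omega⟩
  choose z hzJ hz using key
  refine ⟨fun n => z n n.1, fun n => hzJ n n.1, funext fun m => ?_⟩
  rw [PsiS_eq_ghc_ext hS _ m]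
  have hm0 : 0 < m.1 := hS.2.1 m.1 m.2
  have hzm : ∀ d ∈ m.1.divisors, extS S (fun n : ↥S => z n n.1) d = z m d := by
    intro d hd
    have hddvd := Nat.dvd_of_mem_divisors hd
    have hd0 := Nat.pos_of_mem_divisors hd
    have hdS : d ∈ S := hS.2.2 m.1 m.2 d hddvd hd0
    rw [extS, dif_pos hdS]
    refine ghc_unique hS htf hdS (z := z ⟨d, hdS⟩) (z' := z m) (fun e he => ?_) d dvd_rfl
    have heS : e ∈ S := hS.2.2 d hdS e he (Nat.pos_of_dvd_of_pos he hd0)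
    rw [hz ⟨d, hdS⟩ e he heS, hz m e (he.trans hddvd) heS]
  rw [ghc_congr hzm, hz m m.1 dvd_rfl m.2]

lemma PsiS_mem_XSgrp {S : Set ℕ} (hS : IsTruncationSet S) (J : Set A) (c : ↥S → A)
    (hc : ∀ n, c n ∈ J) : PsiS S c ∈ XSgrp S J := by
  classical
  rw [mem_XSgrp_iff]
  intro F
  set D : Finset ℕ := F.biUnion (fun m => m.1.divisors) with hD
  refine ⟨∑ d ∈ D, if h : d ∈ S then Versch S d (fun ν => c ⟨d, h⟩ ^ ν.1) else 0, ?_, ?_⟩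
  · refine AddSubgroup.sum_mem _ fun d _ => ?_
    split
    · next h => exact AddSubgroup.subset_closure ⟨d, h, c ⟨d, h⟩, hc _, rfl⟩
    · exact zero_mem _
  · intro m hm
    have hm0 : 0 < m.1 := hS.2.1 m.1 m.2
    rw [Finset.sum_apply]
    have hterm : ∀ d ∈ D,
        (if h : d ∈ S then Versch S d (fun ν => c ⟨d, h⟩ ^ ν.1) else 0) m
          = if d ∈ m.1.divisors then (d : A) * (extS S c d) ^ (m.1 / d) else 0 := by
      intro d _
      by_cases hdS : d ∈ S
      · rw [dif_pos hdS, Versch]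
        split
        · next hdvd =>
          rw [if_pos (Nat.mem_divisors.mpr ⟨hdvd, by omega⟩), extS, dif_pos hdS]
        · next hdvd =>
          rw [if_neg (fun hmem => hdvd (Nat.dvd_of_mem_divisors hmem))]
      · rw [dif_neg hdS, if_neg (fun hmem => hdS
          (hS.2.2 m.1 m.2 d (Nat.dvd_of_mem_divisors hmem) (Nat.pos_of_mem_divisors hmem)))]
        rfl
    rw [Finset.sum_congr rfl hterm, Finset.sum_ite_mem,
      Finset.inter_eq_right.mpr (Finset.subset_biUnion_of_mem (fun m : ↥S => m.1.divisors) hm)]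
    rw [PsiS_eq_ghc_ext hS c m, ghc]

end B5

/-- Let `π : A → R` be a surjective ring homomorphism with kernel `I`, where
`A` has no `S`-torsion.  Then `Ψ_S(a) - Ψ_S(b) ∈ X_S(I)` iff `π(a_n) = π(b_n)`
for all `n ∈ S`; moreover every element of `X_S(A)` is congruent modulo
`X_S(I)` to some `Ψ_S(a)`.  Consequently `Ψ_S` induces a well-defined
bijection `ψ_S : R^S → X_S(A)/X_S(I)`. -/
theorem statement6 {A R : Type*} [CommRing A] [CommRing R] (S : Set ℕ)
    (hS : IsTruncationSet S)
    (htf : ∀ n ∈ S, Function.Injective fun x : A => (n : A) * x)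
    (π : A →+* R) (hπ : Function.Surjective π) :
    (∀ a b : ↥S → A,
      PsiS S a - PsiS S b ∈ XSgrp S (RingHom.ker π : Set A) ↔
        ∀ n : ↥S, π (a n) = π (b n)) ∧
    (∀ x ∈ XSgrp S (Set.univ : Set A),
      ∃ a : ↥S → A, x - PsiS S a ∈ XSgrp S (RingHom.ker π : Set A)) := by
  classical
  have hpos : ∀ m : ↥S, 0 < m.1 := fun m => hS.2.1 m.1 m.2
  constructor
  · intro a b
    constructor
    · -- forward direction
      intro h
      obtain ⟨c, hcJ, hPsic⟩ := engine hS htf (RingHom.ker π) _ h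
      intro n
      set zb := extS S b with hzb
      set zc := extS S c with hzc
      have hzcJ : ∀ k, zc k ∈ RingHom.ker π := by
        intro k
        rw [hzc, extS]
        split
        · exact hcJ _
        · exact (RingHom.ker π).zero_mem
      set d := sc (gsum zb zc) with hd
      -- ghost agreement on S
      have h1 : ∀ m : ↥S, ghc (extS S a) m.1 = ghc d m.1 := by
        intro m
        have hm1 : 1 ≤ m.1 := hpos m
        rw [hd, ghc_gsum zb zc hm1, ← PsiS_eq_ghc_ext hS a m, ← PsiS_eq_ghc_ext hS b m,
          ← PsiS_eq_ghc_ext hS c m]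
        have hps := congrFun hPsic m
        rw [Pi.sub_apply] at hps
        linear_combination -hps
      -- coordinates agree on divisors of n
      have h2 : extS S a n.1 = d n.1 := by
        refine ghc_unique hS htf n.2 (fun e he => ?_) n.1 dvd_rfl
        have heS : e ∈ S := hS.2.2 n.1 n.2 e he (Nat.pos_of_dvd_of_pos he (hpos n))
        exact h1 ⟨e, heS⟩
      -- d is congruent to zb mod ker π
      have h3 : ∀ N, 1 ≤ N → gsum zb zc N
          - (fun N => coeff N (PPser zb (Finset.Icc 1 N))) N ∈ RingHom.ker π := by
        intro N _
        have hmul := coeff_mul_sub_mem (RingHom.ker π)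
          (f := PPser zb (Finset.Icc 1 N)) (f' := PPser zb (Finset.Icc 1 N))
          (u := PPser zc (Finset.Icc 1 N)) (u' := 1)
          (fun k => by rw [sub_self]; exact (RingHom.ker π).zero_mem)
          (fun k => by
            rw [coeff_one]
            rcases Nat.eq_zero_or_pos k with rfl | hk
            · rw [coeff_zero_PPser (zero_not_mem_Icc N), if_pos rfl, sub_self]
              exact (RingHom.ker π).zero_mem
            · rw [if_neg (by omega), sub_zero]
              exact coeff_PPser_mem _ (fun n _ => hzcJ n) hk) N
        rwa [mul_one] at hmul
      have h4 := sc_congr_mem (RingHom.ker π) h3 n.1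
      rw [← hd, sc_roundtrip zb (hpos n)] at h4
      have h5 : π (d n.1) = π (zb n.1) := by
        have h6 := RingHom.mem_ker.mp h4
        rw [map_sub] at h6
        exact sub_eq_zero.mp h6
      calc π (a n) = π (extS S a n.1) := by rw [extS_apply]
      _ = π (d n.1) := by rw [h2]
      _ = π (zb n.1) := h5
      _ = π (b n) := by rw [hzb, extS_apply]
    · -- backward direction
      intro hab
      set za := extS S a with hza
      set zb := extS S b with hzb
      have hzJ : ∀ n, za n - zb n ∈ RingHom.ker π := by
        intro n
        rw [hza, hzb, extS, extS]
        split
        · next h =>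
          rw [RingHom.mem_ker, map_sub, hab ⟨n, h⟩, sub_self]
        · rw [sub_self]; exact (RingHom.ker π).zero_mem
      set c := sc (gdiff za zb) with hc
      have hcJ : ∀ k, c k ∈ RingHom.ker π := by
        intro k
        have h1 : ∀ N, 1 ≤ N → gdiff za zb N - gdiff zb zb N ∈ RingHom.ker π := by
          intro N _
          exact coeff_mul_sub_mem (RingHom.ker π)
            (coeff_PPser_sub_mem _ (fun n _ => hzJ n))
            (fun k => by rw [sub_self]; exact (RingHom.ker π).zero_mem) N
        have h2 := sc_congr_mem (RingHom.ker π) h1 k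
        rwa [sc_gdiff_self, sub_zero] at h2
      have heq : PsiS S a - PsiS S b = PsiS S (fun n : ↥S => c n.1) := by
        funext m
        have hm1 : 1 ≤ m.1 := hpos m
        rw [Pi.sub_apply, PsiS_eq_ghc hS c m, hc, ghc_gdiff za zb hm1,
          ← PsiS_eq_ghc_ext hS a m, ← PsiS_eq_ghc_ext hS b m]
      rw [heq]
      exact PsiS_mem_XSgrp hS _ _ (fun n => hcJ n.1)
  · -- part 2
    intro x hx
    have hx' : x ∈ XSgrp S (((⊤ : Ideal A) : Set A)) := by
      rwa [Submodule.top_coe]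
    obtain ⟨c, -, hPsic⟩ := engine hS htf ⊤ x hx'
    exact ⟨c, by rw [hPsic, sub_self]; exact zero_mem _⟩
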